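/- Let G be a finite subgroup of GL(V) and let H be a subgroup of G with dim V^H = 1 that is maximal among the subgroups K of G satisfying dim V^K = 1 (i.e. if H ⊆ K ⊆ G and dim V^K = 1 then K = H). Let v be a nonzero vector of V^H. Then the stabilizer in G of the line ℂ·v equals the normalizer N_G(H), and consequently the G-orbit of the line ℂ·v in projective space has cardinality |G|/|N_G(H)|. -/

import Mathlib

noncomputable section
open MvPolynomial Matrix

/-- The subspace of vectors fixed by every element of a set of invertible matrices. -/
def fixedSpace {n : ℕ} (S : Set (GL (Fin n) ℂ)) : Submodule ℂ (Fin n → ℂ) where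
  carrier := {v | ∀ g ∈ S, (g : Matrix (Fin n) (Fin n) ℂ).mulVec v = v}
  add_mem' := by
    intro a b ha hb g hg
    rw [Matrix.mulVec_add, ha g hg, hb g hg]
  zero_mem' := by
    intro g hg
    simp
  smul_mem' := by
    intro c a ha g hg
    rw [Matrix.mulVec_smul, ha g hg]

/-- subgroup of GL fixing v -/
def fixer {n : ℕ} (v : Fin n → ℂ) : Subgroup (GL (Fin n) ℂ) where
  carrier := {g | (g : Matrix (Fin n) (Fin n) ℂ).mulVec v = v}
  one_mem' := by simp
  mul_mem' := by
    intro a b ha hb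
    simp only [Set.mem_setOf_eq, Units.val_mul] at *
    rw [← Matrix.mulVec_mulVec, hb, ha]
  inv_mem' := by
    intro a ha
    simp only [Set.mem_setOf_eq] at *
    conv_lhs => rw [← ha]
    rw [Matrix.mulVec_mulVec]
    norm_cast
    simp [ha]

lemma inv_mulVec_cancel {n : ℕ} (g : GL (Fin n) ℂ) (v : Fin n → ℂ) :
    (↑(g⁻¹) : Matrix (Fin n) (Fin n) ℂ).mulVec ((↑g : Matrix (Fin n) (Fin n) ℂ).mulVec v) = v := by
  rw [Matrix.mulVec_mulVec]; norm_cast; simp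

lemma mulVec_ne_zero {n : ℕ} (g : GL (Fin n) ℂ) {v : Fin n → ℂ} (hv0 : v ≠ 0) :
    (↑g : Matrix (Fin n) (Fin n) ℂ).mulVec v ≠ 0 := by
  intro h
  apply hv0
  rw [← inv_mulVec_cancel g v, h, Matrix.mulVec_zero]

instance glSubmoduleAction {n : ℕ} : MulAction (GL (Fin n) ℂ) (Submodule ℂ (Fin n → ℂ)) where
  smul g L := L.map (Matrix.mulVecLin (↑g))
  one_smul L := by
    show L.map _ = L
    simp
  mul_smul g h L := by
    show L.map _ = (L.map _).map _
    rw [← Submodule.map_comp]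
    congr 1
    rw [Units.val_mul, Matrix.mulVecLin_mul]

lemma gl_smul_def {n : ℕ} (g : GL (Fin n) ℂ) (L : Submodule ℂ (Fin n → ℂ)) :
    g • L = L.map (Matrix.mulVecLin (↑g)) := rfl

lemma subgroup_glsmul_def {n : ℕ} {S : Subgroup (GL (Fin n) ℂ)} (x : S)
    (L : Submodule ℂ (Fin n → ℂ)) : x • L = (x : GL (Fin n) ℂ) • L := rfl

lemma gl_smul_span {n : ℕ} (g : GL (Fin n) ℂ) (v : Fin n → ℂ) :
    g • Submodule.span ℂ {v} = Submodule.span ℂ {(↑g : Matrix (Fin n) (Fin n) ℂ).mulVec v} := by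
  rw [gl_smul_def, Submodule.map_span, Set.image_singleton, Matrix.mulVecLin_apply]

theorem stmt_4 {n : ℕ} (G H : Subgroup (GL (Fin n) ℂ)) (hG : Finite G) (hHG : H ≤ G)
    (hdim : Module.finrank ℂ (fixedSpace (H : Set (GL (Fin n) ℂ))) = 1)
    (hmax : ∀ K : Subgroup (GL (Fin n) ℂ), H ≤ K → K ≤ G →
      Module.finrank ℂ (fixedSpace (K : Set (GL (Fin n) ℂ))) = 1 → K = H)
    (v : Fin n → ℂ) (hv : v ∈ fixedSpace (H : Set (GL (Fin n) ℂ))) (hv0 : v ≠ 0) :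
    {g : GL (Fin n) ℂ | g ∈ G ∧ ∃ c : ℂ, (g : Matrix (Fin n) (Fin n) ℂ).mulVec v = c • v}
      = {g : GL (Fin n) ℂ | g ∈ G ∧ g ∈ Subgroup.normalizer (H : Set (GL (Fin n) ℂ))} ∧
    Nat.card {L : Submodule ℂ (Fin n → ℂ) |
        ∃ g ∈ G, L = Submodule.span ℂ {(g : Matrix (Fin n) (Fin n) ℂ).mulVec v}}
      * Nat.card {g : GL (Fin n) ℂ | g ∈ G ∧ g ∈ Subgroup.normalizer (H : Set (GL (Fin n) ℂ))} = Nat.card G := by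
  -- the fixed space of H is spanned by v
  have hvspan : v ∈ Submodule.span ℂ {v} := Submodule.mem_span_singleton_self v
  have hspan : fixedSpace (H : Set (GL (Fin n) ℂ)) = Submodule.span ℂ {v} := by
    refine (Submodule.eq_of_le_of_finrank_le ((Submodule.span_singleton_le_iff_mem v _).mpr hv)
      ?_).symm
    rw [hdim, finrank_span_singleton hv0]
  -- key step: if g ∈ G maps v to a multiple of itself, then g H g⁻¹ ≤ H
  have key : ∀ g : GL (Fin n) ℂ, g ∈ G →
      (∃ c : ℂ, (g : Matrix (Fin n) (Fin n) ℂ).mulVec v = c • v) →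
      Subgroup.map (MulAut.conj g).toMonoidHom H ≤ H := by
    intro g hgG ⟨c, hc⟩
    have hc0 : c ≠ 0 := by
      intro h
      exact mulVec_ne_zero g hv0 (by rw [hc, h, zero_smul])
    have hginv : (↑(g⁻¹) : Matrix (Fin n) (Fin n) ℂ).mulVec v = c⁻¹ • v := by
      have := congrArg (fun w => c⁻¹ • (↑(g⁻¹) : Matrix (Fin n) (Fin n) ℂ).mulVec w) hc
      simp only [Matrix.mulVec_smul, inv_mulVec_cancel, smul_smul, inv_mul_cancel₀ hc0,
        one_smul] at this
      exact this.symm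
    -- conjugates of H fix v
    have hconjfix : Subgroup.map (MulAut.conj g).toMonoidHom H ≤ fixer v := by
      rintro x hx
      rcases Subgroup.mem_map.mp hx with ⟨h, hh, rfl⟩
      show ((g * h * g⁻¹ : GL (Fin n) ℂ) : Matrix (Fin n) (Fin n) ℂ).mulVec v = v
      rw [Units.val_mul, Units.val_mul, ← Matrix.mulVec_mulVec, ← Matrix.mulVec_mulVec, hginv,
        Matrix.mulVec_smul, hv h hh, Matrix.mulVec_smul, hc, smul_smul,
        inv_mul_cancel₀ hc0, one_smul]
    -- consider K = H ⊔ gHg⁻¹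
    set K := H ⊔ Subgroup.map (MulAut.conj g).toMonoidHom H with hK
    have hKG : K ≤ G := by
      refine sup_le hHG ?_
      rintro x hx
      rcases Subgroup.mem_map.mp hx with ⟨h, hh, rfl⟩
      show g * h * g⁻¹ ∈ G
      exact mul_mem (mul_mem hgG (hHG hh)) (inv_mem hgG)
    have hKfix : (K : Set (GL (Fin n) ℂ)) ⊆ (fixer v : Set (GL (Fin n) ℂ)) := by
      have : K ≤ fixer v := sup_le (fun x hx => hv x hx) hconjfix
      exact this
    have hvK : v ∈ fixedSpace (K : Set (GL (Fin n) ℂ)) := fun x hx => hKfix hx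
    have hKdim : Module.finrank ℂ (fixedSpace (K : Set (GL (Fin n) ℂ))) = 1 := by
      refine le_antisymm ?_ ?_
      · rw [← hdim]
        exact Submodule.finrank_mono (fun x hx g' hg' => hx g' (le_sup_left (a := H) hg'))
      · calc 1 = Module.finrank ℂ (Submodule.span ℂ {v}) := (finrank_span_singleton hv0).symm
          _ ≤ _ := Submodule.finrank_mono
            ((Submodule.span_singleton_le_iff_mem v _).mpr hvK)
    have := hmax K le_sup_left hKG hKdim
    calc Subgroup.map (MulAut.conj g).toMonoidHom H ≤ K := le_sup_right
      _ = H := this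
  -- Part 1
  have part1 : {g : GL (Fin n) ℂ | g ∈ G ∧ ∃ c : ℂ,
      (g : Matrix (Fin n) (Fin n) ℂ).mulVec v = c • v}
      = {g : GL (Fin n) ℂ | g ∈ G ∧ g ∈ Subgroup.normalizer (H : Set (GL (Fin n) ℂ))} := by
    ext g
    simp only [Set.mem_setOf_eq]
    constructor
    · rintro ⟨hgG, c, hc⟩
      refine ⟨hgG, ?_⟩
      have hc0 : c ≠ 0 := by
        intro h
        exact mulVec_ne_zero g hv0 (by rw [hc, h, zero_smul])
      have h1 := key g hgG ⟨c, hc⟩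
      have hginv : (↑(g⁻¹) : Matrix (Fin n) (Fin n) ℂ).mulVec v = c⁻¹ • v := by
        have := congrArg (fun w => c⁻¹ • (↑(g⁻¹) : Matrix (Fin n) (Fin n) ℂ).mulVec w) hc
        simp only [Matrix.mulVec_smul, inv_mulVec_cancel, smul_smul, inv_mul_cancel₀ hc0,
          one_smul] at this
        exact this.symm
      have h2 := key g⁻¹ (inv_mem hgG) ⟨c⁻¹, hginv⟩
      rw [Subgroup.mem_normalizer_iff]
      intro h
      constructor
      · intro hh
        exact h1 (Subgroup.mem_map.mpr ⟨h, hh, rfl⟩)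
      · intro hh
        have h3 : g⁻¹ * (g * h * g⁻¹) * (g⁻¹)⁻¹ ∈ H :=
          h2 (Subgroup.mem_map.mpr ⟨g * h * g⁻¹, hh, rfl⟩)
        have heq : g⁻¹ * (g * h * g⁻¹) * (g⁻¹)⁻¹ = h := by group
        rwa [heq] at h3
    · rintro ⟨hgG, hgN⟩
      refine ⟨hgG, ?_⟩
      have hmem : (↑g : Matrix (Fin n) (Fin n) ℂ).mulVec v
          ∈ fixedSpace (H : Set (GL (Fin n) ℂ)) := by
        intro h hh
        have hh' : g⁻¹ * h * g ∈ H := by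
          have := (Subgroup.mem_normalizer_iff.mp hgN (g⁻¹ * h * g)).mpr
          apply this
          have : g * (g⁻¹ * h * g) * g⁻¹ = h := by group
          rwa [this]
        have := hv _ hh'
        have hge : h * g = g * (g⁻¹ * h * g) := by group
        calc (↑h : Matrix (Fin n) (Fin n) ℂ).mulVec ((↑g : Matrix _ _ ℂ).mulVec v)
            = (↑(h * g) : Matrix (Fin n) (Fin n) ℂ).mulVec v := by
              rw [Matrix.mulVec_mulVec, ← Units.val_mul]
          _ = (↑g : Matrix (Fin n) (Fin n) ℂ).mulVec
              ((↑(g⁻¹ * h * g) : Matrix (Fin n) (Fin n) ℂ).mulVec v) := by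
              rw [Matrix.mulVec_mulVec, ← Units.val_mul, hge]
          _ = (↑g : Matrix (Fin n) (Fin n) ℂ).mulVec v := by rw [this]
      rw [hspan, Submodule.mem_span_singleton] at hmem
      rcases hmem with ⟨c, hc⟩
      exact ⟨c, hc.symm⟩
  refine ⟨part1, ?_⟩
  -- Part 2: orbit-stabilizer
  classical
  -- the orbit of span{v} under G
  have horb : {L : Submodule ℂ (Fin n → ℂ) |
      ∃ g ∈ G, L = Submodule.span ℂ {(g : Matrix (Fin n) (Fin n) ℂ).mulVec v}}
      = MulAction.orbit G (Submodule.span ℂ {v}) := by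
    ext L
    simp only [Set.mem_setOf_eq, MulAction.mem_orbit_iff]
    constructor
    · rintro ⟨g, hgG, rfl⟩
      refine ⟨⟨g, hgG⟩, ?_⟩
      rw [subgroup_glsmul_def, gl_smul_span]
    · rintro ⟨⟨g, hgG⟩, rfl⟩
      refine ⟨g, hgG, ?_⟩
      rw [subgroup_glsmul_def, gl_smul_span]
  -- the stabilizer of span{v} in G
  have hstab : ∀ x : G, x ∈ MulAction.stabilizer G (Submodule.span ℂ {v}) ↔
      ((x : GL (Fin n) ℂ) ∈ G ∧ (x : GL (Fin n) ℂ) ∈ Subgroup.normalizer (H : Set (GL (Fin n) ℂ))) := by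
    intro x
    rw [MulAction.mem_stabilizer_iff]
    have hx : ((x : GL (Fin n) ℂ)) • Submodule.span ℂ {v} =
        Submodule.span ℂ {((x : GL (Fin n) ℂ) : Matrix (Fin n) (Fin n) ℂ).mulVec v} :=
      gl_smul_span _ v
    constructor
    · intro h
      have h' : ((x : GL (Fin n) ℂ) : Matrix (Fin n) (Fin n) ℂ).mulVec v
          ∈ Submodule.span ℂ {v} := by
        rw [← h, subgroup_glsmul_def, hx]
        exact Submodule.mem_span_singleton_self _
      rw [Submodule.mem_span_singleton] at h'
      rcases h' with ⟨c, hc⟩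
      have : (x : GL (Fin n) ℂ) ∈ {g : GL (Fin n) ℂ | g ∈ G ∧ g ∈ Subgroup.normalizer (H : Set (GL (Fin n) ℂ))} := by
        rw [← part1]
        exact ⟨x.2, c, hc.symm⟩
      exact this
    · rintro ⟨-, hN⟩
      have : (x : GL (Fin n) ℂ) ∈ {g : GL (Fin n) ℂ | g ∈ G ∧
          ∃ c : ℂ, (g : Matrix (Fin n) (Fin n) ℂ).mulVec v = c • v} := by
        rw [part1]; exact ⟨x.2, hN⟩
      rcases this with ⟨-, c, hc⟩
      have hc0 : c ≠ 0 := by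
        intro h
        exact mulVec_ne_zero _ hv0 (by rw [hc, h, zero_smul])
      rw [subgroup_glsmul_def, hx, hc]
      exact Submodule.span_singleton_smul_eq (IsUnit.mk0 c hc0) v
  have hcard1 : Nat.card {g : GL (Fin n) ℂ | g ∈ G ∧ g ∈ Subgroup.normalizer (H : Set (GL (Fin n) ℂ))}
      = Nat.card (MulAction.stabilizer G (Submodule.span ℂ {v})) := by
    refine Nat.card_congr ?_
    refine (Equiv.subtypeSubtypeEquivSubtypeInter (fun g : GL (Fin n) ℂ => g ∈ G)
      (fun g => g ∈ Subgroup.normalizer (H : Set (GL (Fin n) ℂ)))).symm.trans ?_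
    exact Equiv.subtypeEquivRight (fun x => by
      rw [hstab x]
      exact ⟨fun h => ⟨x.2, h⟩, fun h => h.2⟩)
  rw [horb, hcard1, ← Nat.card_prod]
  exact Nat.card_congr (MulAction.orbitProdStabilizerEquivGroup G (Submodule.span ℂ {v}))
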